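/- If G is a tree of order n whose Seidel matrix is singular, then n ≡ 1 (mod 8). -/
import Mathlib


open Matrix


-- reduce a nonzero integer kernel vector to one with an odd coordinate
theorem reduce_odd {n : ℕ} (S : Matrix (Fin n) (Fin n) ℤ) :
    ∀ N : ℕ, ∀ v : Fin n → ℤ, (∑ i, (v i).natAbs) = N → v ≠ 0 → S.mulVec v = 0 →
      ∃ y : Fin n → ℤ, S.mulVec y = 0 ∧ ∃ i, Odd (y i) := by
  intro N
  induction N using Nat.strong_induction_on with
  | _ N ih =>
    intro v hN hv0 hvker
    by_cases hodd : ∃ i, Odd (v i)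
    · exact ⟨v, hvker, hodd⟩
    · push_neg at hodd
      simp only [Int.not_odd_iff_even] at hodd
      have hdvd : ∀ i, 2 ∣ v i := fun i => (hodd i).two_dvd
      set w : Fin n → ℤ := fun i => v i / 2 with hw
      have hv2 : v = 2 • w := by
        funext i
        simp only [hw, Pi.smul_apply, smul_eq_mul]
        exact (Int.ediv_mul_cancel (hdvd i)).symm ▸ (Int.mul_ediv_cancel' (hdvd i)).symm
      have hwker : S.mulVec w = 0 := by
        have : S.mulVec (2 • w) = 2 • S.mulVec w := S.mulVec_smul 2 w
        rw [← hv2, hvker] at this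
        funext i
        have := congrFun this.symm i
        simpa using this
      have hw0 : w ≠ 0 := by
        intro h
        apply hv0
        rw [hv2, h, smul_zero]
      obtain ⟨j, hj⟩ : ∃ j, v j ≠ 0 := by
        by_contra h; push_neg at h; exact hv0 (funext h)
      have hlt : (∑ i, (w i).natAbs) < N := by
        rw [← hN]
        have hle : ∀ i, (w i).natAbs ≤ (v i).natAbs := by
          intro i
          have : v i = 2 * w i := by rw [hv2]; simp
          rw [this, Int.natAbs_mul]
          norm_num
          omega
        have hjlt : (w j).natAbs < (v j).natAbs := by
          have h2 : v j = 2 * w j := by rw [hv2]; simp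
          have : w j ≠ 0 := by intro h; apply hj; rw [h2, h, mul_zero]
          rw [h2, Int.natAbs_mul]
          have := Int.natAbs_pos.mpr this
          norm_num
          omega
        exact Finset.sum_lt_sum (fun i _ => hle i) ⟨j, Finset.mem_univ j, hjlt⟩
      exact ih _ hlt w rfl hw0 hwker

def seidelMatrix {n : ℕ} (G : SimpleGraph (Fin n)) [DecidableRel G.Adj] :
    Matrix (Fin n) (Fin n) ℤ :=
  Matrix.of fun i j => if i = j then 0 else if G.Adj i j then -1 else 1

theorem seidel_singular_tree_order {n : ℕ} (G : SimpleGraph (Fin n))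
    [DecidableRel G.Adj]
    (htree : G.IsTree)
    (hsing : (seidelMatrix G).det = 0) :
    n % 8 = 1 := by
  classical
  obtain ⟨v, hv0, hvker⟩ := Matrix.exists_mulVec_eq_zero_iff.mpr hsing
  obtain ⟨y, hyker, i₀, hi₀⟩ := reduce_odd (seidelMatrix G) _ v rfl hv0 hvker
  set z : Fin n → ZMod 8 := fun i => ((y i : ℤ) : ZMod 8) with hzdef
  set b : Fin n → Fin n → ZMod 8 := fun i j => if G.Adj i j then 1 else 0 with hbdef
  set s : ZMod 8 := ∑ j, z j with hsdef
  set q : Fin n → ZMod 8 := fun i => ∑ j, b i j * z j with hqdef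
  set d : Fin n → ZMod 8 := fun i => ∑ j, b i j with hddef
  set m : ℕ := G.edgeFinset.card with hmdef
  -- the basic relation from the kernel equation
  have hz : ∀ i, z i = s - 2 * q i := by
    intro i
    have h0 : (∑ j, seidelMatrix G i j * y j) = 0 := by
      have := congrFun hyker i
      simpa [Matrix.mulVec, dotProduct] using this
    have h1 : (∑ j, ((seidelMatrix G i j : ℤ) : ZMod 8) * z j) = 0 := by
      have := congrArg (Int.cast : ℤ → ZMod 8) h0
      push_cast at this
      simpa [hzdef] using this
    have h2 : ∀ j, ((seidelMatrix G i j : ℤ) : ZMod 8)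
        = (if i = j then 0 else 1) - 2 * b i j := by
      intro j
      simp only [seidelMatrix, Matrix.of_apply, hbdef]
      by_cases hij : i = j
      · subst hij
        simp [G.irrefl]
      · by_cases hadj : G.Adj i j <;> simp [hij, hadj] <;> push_cast <;> ring
    rw [Finset.sum_congr rfl (fun j _ => by rw [h2 j])] at h1
    have h3 : ∑ j, ((if i = j then (0:ZMod 8) else 1) - 2 * b i j) * z j
        = (s - z i) - 2 * q i := by
      rw [Finset.sum_congr rfl (fun j _ => by ring_nf :
        ∀ j ∈ Finset.univ, ((if i = j then (0:ZMod 8) else 1) - 2 * b i j) * z j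
          = (if i = j then (0:ZMod 8) else 1) * z j - 2 * (b i j * z j))]
      rw [Finset.sum_sub_distrib]
      congr 1
      · have : ∀ j, (if i = j then (0:ZMod 8) else 1) * z j
            = z j - (if i = j then z j else 0) := by
          intro j; by_cases h : i = j <;> simp [h]
        rw [Finset.sum_congr rfl (fun j _ => this j), Finset.sum_sub_distrib,
          Finset.sum_ite_eq]
        simp [hsdef]
      · rw [← Finset.mul_sum]
    rw [h3] at h1
    linear_combination -h1
  -- symmetry of b
  have hsym : ∀ i j, b i j = b j i := by
    intro i j
    simp only [hbdef]
    by_cases h : G.Adj i j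
    · simp [h, h.symm]
    · have h' : ¬ G.Adj j i := fun hc => h hc.symm
      simp [h, h']
  -- degree sums
  have hdsum : ∑ j, d j = 2 * (m : ZMod 8) := by
    have hdeg : ∀ j, d j = (G.degree j : ZMod 8) := by
      intro j
      simp only [hddef, hbdef, SimpleGraph.degree, SimpleGraph.neighborFinset_eq_filter]
      simp [Finset.sum_boole]
    rw [Finset.sum_congr rfl (fun j _ => hdeg j)]
    rw [← Nat.cast_sum, SimpleGraph.sum_degrees_eq_twice_card_edges]
    push_cast
    ring
  -- the chain of substitutions
  have h1 : s = (n : ZMod 8) * s - 2 * ∑ j, q j := by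
    calc s = ∑ i, z i := hsdef
    _ = ∑ i, (s - 2 * q i) := Finset.sum_congr rfl (fun i _ => hz i)
    _ = (n : ZMod 8) * s - 2 * ∑ j, q j := by
        rw [Finset.sum_sub_distrib, Finset.sum_const, Finset.card_univ, Fintype.card_fin,
          ← Finset.mul_sum, nsmul_eq_mul]
  have h2 : ∑ j, q j = ∑ j, d j * z j := by
    simp only [hqdef, hddef]
    rw [Finset.sum_comm]
    refine Finset.sum_congr rfl (fun j _ => ?_)
    rw [Finset.sum_mul]
    exact Finset.sum_congr rfl (fun i _ => by rw [hsym i j])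
  have h3 : ∑ j, d j * z j = 2 * (m : ZMod 8) * s - 2 * ∑ j, d j * q j := by
    rw [Finset.sum_congr rfl (fun j _ => by rw [hz j])]
    rw [Finset.sum_congr rfl (fun j _ => by ring :
      ∀ j ∈ Finset.univ, d j * (s - 2 * q j) = d j * s - 2 * (d j * q j))]
    rw [Finset.sum_sub_distrib, ← Finset.sum_mul, hdsum, ← Finset.mul_sum]
  have h4 : ∑ j, d j * q j = ∑ k, (∑ j, d j * b j k) * z k := by
    simp only [hqdef]
    rw [Finset.sum_congr rfl (fun j _ => by rw [Finset.mul_sum] :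
      ∀ j ∈ Finset.univ, d j * ∑ k, b j k * z k = ∑ k, d j * (b j k * z k))]
    rw [Finset.sum_comm]
    refine Finset.sum_congr rfl (fun k _ => ?_)
    rw [Finset.sum_mul]
    exact Finset.sum_congr rfl (fun j _ => by ring)
  have h6 : (4 : ZMod 8) * ∑ k, (∑ j, d j * b j k) = 0 := by
    have he : ∑ k, (∑ j, d j * b j k) = ∑ j, d j * d j := by
      rw [Finset.sum_comm]
      refine Finset.sum_congr rfl (fun j _ => ?_)
      rw [← Finset.mul_sum, hddef]
    rw [he, Finset.mul_sum]
    have hx : ∀ x : ZMod 8, (4 : ZMod 8) * (x * x) = 4 * x := by decide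
    rw [Finset.sum_congr rfl (fun j _ => hx (d j)), ← Finset.mul_sum, hdsum]
    have : (4 : ZMod 8) * (2 * (m : ZMod 8)) = 8 * m := by ring
    rw [this]
    have h80 : (8 : ZMod 8) = 0 := by decide
    rw [h80, zero_mul]
  have h5 : ∑ k, (∑ j, d j * b j k) * z k
      = (∑ k, (∑ j, d j * b j k)) * s
        - 2 * ∑ k, (∑ j, d j * b j k) * q k := by
    rw [Finset.sum_congr rfl (fun k _ => by rw [hz k]; ring_nf :
      ∀ k ∈ Finset.univ, (∑ j, d j * b j k) * z k
        = (∑ j, d j * b j k) * s - 2 * ((∑ j, d j * b j k) * q k))]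
    rw [Finset.sum_sub_distrib, ← Finset.sum_mul, ← Finset.mul_sum]
  -- combine
  have hcomb : s = (n : ZMod 8) * s - 4 * (m : ZMod 8) * s := by
    have h80 : (8 : ZMod 8) = 0 := by decide
    calc s = (n : ZMod 8) * s - 2 * ∑ j, q j := h1
    _ = (n : ZMod 8) * s - 2 * (2 * (m : ZMod 8) * s - 2 * ∑ j, d j * q j) := by
        rw [h2, h3]
    _ = (n : ZMod 8) * s - 4 * (m : ZMod 8) * s + 4 * ∑ j, d j * q j := by ring
    _ = (n : ZMod 8) * s - 4 * (m : ZMod 8) * s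
          + 4 * ((∑ k, (∑ j, d j * b j k)) * s - 2 * ∑ k, (∑ j, d j * b j k) * q k) := by
        rw [h4, h5]
    _ = (n : ZMod 8) * s - 4 * (m : ZMod 8) * s
          + (4 * ∑ k, (∑ j, d j * b j k)) * s
          - 8 * ∑ k, (∑ j, d j * b j k) * q k := by ring
    _ = (n : ZMod 8) * s - 4 * (m : ZMod 8) * s := by
        rw [h6, h80]; ring
  -- s is a unit
  have hsu : IsUnit s := by
    obtain ⟨k, hk⟩ := hi₀
    have hzodd : z i₀ = 2 * ((k : ℤ) : ZMod 8) + 1 := by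
      simp only [hzdef, hk]
      push_cast
      ring
    have hs' : s = 2 * (((k : ℤ) : ZMod 8) + q i₀) + 1 := by
      have := hz i₀
      rw [hzodd] at this
      linear_combination -this
    rw [hs']
    have : ∀ c : ZMod 8, IsUnit (2 * c + 1) := by decide
    exact this _
  -- conclude
  have hkey : s * ((n : ZMod 8) - 4 * (m : ZMod 8) - 1) = 0 := by
    linear_combination -hcomb
  have hmod : (n : ZMod 8) - 4 * (m : ZMod 8) - 1 = 0 :=
    (hsu.mul_right_eq_zero).mp hkey
  have hn1 : 1 ≤ n := by
    have : Nonempty (Fin n) := htree.isConnected.nonempty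
    exact Nat.pos_of_ne_zero (fun h => by subst h; exact (Fin.elim0 this.some))
  obtain ⟨t, rfl⟩ : ∃ t, n = t + 1 := ⟨n - 1, by omega⟩
  have hmt : m = t := by
    have := htree.card_edgeFinset
    rw [Fintype.card_fin] at this
    omega
  rw [hmt] at hmod
  have h3t : (3 : ZMod 8) * (t : ZMod 8) = 0 := by
    push_cast at hmod
    linear_combination -hmod
  have ht0 : (t : ZMod 8) = 0 := by
    have h9 : (3 : ZMod 8) * 3 = 1 := by decide
    calc (t : ZMod 8) = (3 * 3) * t := by rw [h9, one_mul]
    _ = 3 * (3 * t) := by ring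
    _ = 0 := by rw [h3t, mul_zero]
  have : (8 : ℕ) ∣ t := (ZMod.natCast_eq_zero_iff t 8).mp ht0
  omega
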